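/- arXiv:0901.1226 — 3 statements merged into one kernel-verified Lean document; each statement's English description precedes it below -/
import Mathlib

section
/- The limit as γ → 1 of [α₀·(−iω)^γ / cos(πγ/2) + i·α₀·tan(πγ/2)·|ω₀|^{γ−1}·ω] equals α₀·|ω| + i·α₀·(2/π)·ω·(log|ω| − log|ω₀|), for any fixed ω ≠ 0 and ω₀ > 0. -/
open Real Filter Complex

lemma cpow_expand_pos (ω : ℝ) (hω : 0 < ω) (γ : ℝ) :
    ((-Complex.I) * (ω : ℂ)) ^ (γ : ℂ)
      = ((ω ^ γ : ℝ) : ℂ) * (((Real.cos (π * γ / 2) : ℝ) : ℂ) - Complex.I * ((Real.sin (π * γ / 2) : ℝ) : ℂ)) := by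
  have hne : (-Complex.I) * (ω : ℂ) ≠ 0 := by
    simp [Complex.I_ne_zero, Complex.ofReal_ne_zero, hω.ne']
  rw [Complex.cpow_def_of_ne_zero hne]
  have harg : Complex.arg ((-Complex.I) * (ω : ℂ)) = -(π/2) := by
    rw [mul_comm, Complex.arg_real_mul _ hω, Complex.arg_neg_I]
  have habs : ‖(-Complex.I) * (ω : ℂ)‖ = ω := by
    simp [abs_of_pos hω]
  have hlog : Complex.log ((-Complex.I) * (ω : ℂ))
      = ((Real.log ω : ℝ) : ℂ) + ((-(π/2) : ℝ) : ℂ) * Complex.I := by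
    show ((Real.log ‖_‖ : ℝ) : ℂ) + _ = _
    rw [habs, harg]
  rw [hlog]
  have : (((Real.log ω : ℝ) : ℂ) + ((-(π/2) : ℝ) : ℂ) * Complex.I) * (γ : ℂ)
      = ((Real.log ω * γ : ℝ) : ℂ) + ((-(π * γ / 2) : ℝ) : ℂ) * Complex.I := by
    push_cast; ring
  rw [this, Complex.exp_add, Complex.exp_mul_I, ← Complex.ofReal_exp,
    ← Complex.ofReal_cos, ← Complex.ofReal_sin, Real.cos_neg, Real.sin_neg,
    Real.rpow_def_of_pos hω, mul_comm (Real.log ω) γ]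
  push_cast
  ring

lemma cpow_expand_neg (ω : ℝ) (hω : ω < 0) (γ : ℝ) :
    ((-Complex.I) * (ω : ℂ)) ^ (γ : ℂ)
      = ((|ω| ^ γ : ℝ) : ℂ) * (((Real.cos (π * γ / 2) : ℝ) : ℂ) + Complex.I * ((Real.sin (π * γ / 2) : ℝ) : ℂ)) := by
  have hne : (-Complex.I) * (ω : ℂ) ≠ 0 := by
    simp [Complex.I_ne_zero, Complex.ofReal_ne_zero, hω.ne]
  have hmul : (-Complex.I) * (ω : ℂ) = ((-ω : ℝ) : ℂ) * Complex.I := by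
    push_cast; ring
  rw [Complex.cpow_def_of_ne_zero hne]
  have harg : Complex.arg ((-Complex.I) * (ω : ℂ)) = π/2 := by
    rw [hmul, Complex.arg_real_mul _ (by linarith : (0:ℝ) < -ω), Complex.arg_I]
  have habs : ‖(-Complex.I) * (ω : ℂ)‖ = |ω| := by
    simp
  have hlog : Complex.log ((-Complex.I) * (ω : ℂ))
      = ((Real.log |ω| : ℝ) : ℂ) + ((π/2 : ℝ) : ℂ) * Complex.I := by
    show ((Real.log ‖_‖ : ℝ) : ℂ) + _ = _
    rw [habs, harg]
  rw [hlog]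
  have : (((Real.log |ω| : ℝ) : ℂ) + ((π/2 : ℝ) : ℂ) * Complex.I) * (γ : ℂ)
      = ((Real.log |ω| * γ : ℝ) : ℂ) + ((π * γ / 2 : ℝ) : ℂ) * Complex.I := by
    push_cast; ring
  rw [this, Complex.exp_add, Complex.exp_mul_I, ← Complex.ofReal_exp,
    ← Complex.ofReal_cos, ← Complex.ofReal_sin,
    Real.rpow_def_of_pos (abs_pos.mpr hω.ne), mul_comm (Real.log |ω|) γ]
  push_cast
  ring

lemma tendsto_sub_one : Tendsto (fun γ : ℝ => γ - 1) (nhdsWithin 1 {(1:ℝ)}ᶜ) (nhdsWithin 0 {(0:ℝ)}ᶜ) := by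
  rw [tendsto_nhdsWithin_iff]
  constructor
  · have h : Tendsto (fun γ : ℝ => γ - 1) (nhds (1:ℝ)) (nhds 0) := by
      simpa using (continuous_sub_right (1:ℝ)).tendsto 1
    exact h.mono_left nhdsWithin_le_nhds
  · filter_upwards [self_mem_nhdsWithin] with γ hγ
    simpa [sub_eq_zero] using hγ

lemma rpow_slope (a : ℝ) (ha : 0 < a) :
    Tendsto (fun γ : ℝ => (a ^ (γ - 1) - 1) / (γ - 1)) (nhdsWithin 1 {(1:ℝ)}ᶜ)
      (nhds (Real.log a)) := by
  have hd : HasDerivAt (fun t : ℝ => a ^ t) (Real.log a) 0 := by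
    have h1 : HasDerivAt (fun t : ℝ => Real.log a * t) (Real.log a) 0 := by
      simpa using (hasDerivAt_id (0:ℝ)).const_mul (Real.log a)
    have h2 := (Real.hasDerivAt_exp (Real.log a * 0)).comp 0 h1
    simp only [mul_zero, Real.exp_zero, one_mul] at h2
    have heq : (fun t : ℝ => Real.exp (Real.log a * t)) = fun t : ℝ => a ^ t := by
      funext t; rw [Real.rpow_def_of_pos ha]
    rwa [← heq]
  have h2 := (hasDerivAt_iff_tendsto_slope.mp hd).comp tendsto_sub_one
  refine h2.congr fun γ => ?_
  simp [slope, Function.comp, Real.rpow_zero, div_eq_inv_mul]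

lemma tan_slope : Tendsto (fun γ : ℝ => (γ - 1) * Real.tan (π * γ / 2))
    (nhdsWithin 1 {(1:ℝ)}ᶜ) (nhds (-(2/π))) := by
  have hd : HasDerivAt (fun γ : ℝ => Real.cos (π * γ / 2)) (-(π/2)) 1 := by
    have h1 : HasDerivAt (fun γ : ℝ => π * γ / 2) (π/2) 1 := by
      simpa using ((hasDerivAt_id (1:ℝ)).const_mul π).div_const 2
    have h2 := (Real.hasDerivAt_cos (π * 1 / 2)).comp 1 h1
    have : π * (1:ℝ) / 2 = π / 2 := by ring
    simpa [Function.comp_def, this, Real.sin_pi_div_two] using h2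
  have hslope := hasDerivAt_iff_tendsto_slope.mp hd
  have hpi : π * (1:ℝ) / 2 = π / 2 := by ring
  have hs : Tendsto (fun γ : ℝ => Real.cos (π * γ / 2) / (γ - 1)) (nhdsWithin 1 {(1:ℝ)}ᶜ)
      (nhds (-(π/2))) := by
    refine hslope.congr fun γ => ?_
    rw [slope_def_field, hpi, Real.cos_pi_div_two, sub_zero]
  have hsin : Tendsto (fun γ : ℝ => Real.sin (π * γ / 2)) (nhdsWithin 1 {(1:ℝ)}ᶜ) (nhds 1) := by
    have h := (Real.continuous_sin.comp (by continuity : Continuous fun γ : ℝ => π * γ / 2)).tendsto 1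
    simp only [Function.comp, hpi, Real.sin_pi_div_two] at h
    exact h.mono_left nhdsWithin_le_nhds
  have hne : -(π/2) ≠ (0:ℝ) := neg_ne_zero.mpr (by positivity : (0:ℝ) < π/2).ne'
  have key := hsin.mul (hs.inv₀ hne)
  have hval : (1:ℝ) * (-(π/2))⁻¹ = -(2/π) := by
    rw [one_mul, inv_neg, inv_div]
  rw [hval] at key
  refine key.congr fun γ => ?_
  rw [Real.tan_eq_sin_div_cos, inv_div]
  ring

theorem alpha_star_limit_gamma_one (α₀ ω₀ ω : ℝ) (hα : 0 < α₀) (hω₀ : 0 < ω₀)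
    (hω : ω ≠ 0) :
    Tendsto
      (fun γ : ℝ =>
        (α₀ : ℂ) * ((-Complex.I) * (ω : ℂ)) ^ (γ : ℂ) / (Real.cos (π * γ / 2) : ℂ)
          + Complex.I * (α₀ : ℂ) * (Real.tan (π * γ / 2) : ℂ)
              * ((|ω₀| ^ (γ - 1) : ℝ) : ℂ) * (ω : ℂ))
      (nhdsWithin 1 {γ : ℝ | ∀ n : ℤ, γ ≠ (n : ℝ)})
      (nhds ((α₀ * |ω| : ℝ) +
        Complex.I * (α₀ : ℂ) * ((2 / π : ℝ) : ℂ) * (ω : ℂ)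
          * ((Real.log |ω| - Real.log |ω₀| : ℝ) : ℂ))) := by
  set S : Set ℝ := {γ : ℝ | ∀ n : ℤ, γ ≠ (n : ℝ)} with hSdef
  have hS1 : S ⊆ {(1:ℝ)}ᶜ := by
    intro γ hγ
    simpa using hγ 1
  have hL : nhdsWithin (1:ℝ) S ≤ nhdsWithin 1 {(1:ℝ)}ᶜ := nhdsWithin_mono _ hS1
  have habs : (0:ℝ) < |ω| := abs_pos.mpr hω
  have habs₀ : (0:ℝ) < |ω₀| := abs_pos.mpr hω₀.ne'
  -- real limits
  have hA : Tendsto (fun γ : ℝ => |ω| ^ γ) (nhdsWithin 1 S) (nhds |ω|) := by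
    have h : Tendsto (fun γ : ℝ => |ω| ^ γ) (nhds (1:ℝ)) (nhds |ω|) := by
      have hc : Continuous (fun γ : ℝ => Real.exp (Real.log |ω| * γ)) := by continuity
      have := hc.tendsto 1
      simp only [mul_one, Real.exp_log habs] at this
      refine this.congr' ?_
      filter_upwards with γ
      rw [Real.rpow_def_of_pos habs, mul_comm]
    exact h.mono_left nhdsWithin_le_nhds
  have hB : Tendsto (fun γ : ℝ => (|ω₀| ^ (γ-1) - |ω| ^ (γ-1)) / (γ-1)) (nhdsWithin 1 S)
      (nhds (Real.log |ω₀| - Real.log |ω|)) := by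
    have h := ((rpow_slope _ habs₀).sub (rpow_slope _ habs)).mono_left hL
    refine h.congr fun γ => ?_
    ring
  have hC := tan_slope.mono_left hL
  -- combined complex limit
  have hBC : Tendsto (fun γ : ℝ => ((γ-1) * Real.tan (π * γ / 2)) *
      ((|ω₀| ^ (γ-1) - |ω| ^ (γ-1)) / (γ-1))) (nhdsWithin 1 S)
      (nhds (-(2/π) * (Real.log |ω₀| - Real.log |ω|))) := hC.mul hB
  have hg : Tendsto (fun γ : ℝ =>
      ((α₀ * (|ω| ^ γ) : ℝ) : ℂ) + Complex.I * (α₀ : ℂ) * (ω : ℂ) *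
        ((((γ-1) * Real.tan (π * γ / 2)) * ((|ω₀| ^ (γ-1) - |ω| ^ (γ-1)) / (γ-1)) : ℝ) : ℂ))
      (nhdsWithin 1 S)
      (nhds (((α₀ * |ω| : ℝ) : ℂ) + Complex.I * (α₀ : ℂ) * (ω : ℂ) *
        ((-(2/π) * (Real.log |ω₀| - Real.log |ω|) : ℝ) : ℂ))) := by
    have h1 : Tendsto (fun γ : ℝ => ((α₀ * (|ω| ^ γ) : ℝ) : ℂ)) (nhdsWithin 1 S)
        (nhds ((α₀ * |ω| : ℝ) : ℂ)) :=
      (Complex.continuous_ofReal.tendsto _).comp ((tendsto_const_nhds.mul hA))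
    have h2 : Tendsto (fun γ : ℝ =>
        ((((γ-1) * Real.tan (π * γ / 2)) * ((|ω₀| ^ (γ-1) - |ω| ^ (γ-1)) / (γ-1)) : ℝ) : ℂ))
        (nhdsWithin 1 S) (nhds ((-(2/π) * (Real.log |ω₀| - Real.log |ω|) : ℝ) : ℂ)) :=
      (Complex.continuous_ofReal.tendsto _).comp hBC
    exact h1.add ((tendsto_const_nhds.mul h2))
  -- identify the limit value
  have hval : (((α₀ * |ω| : ℝ) : ℂ) + Complex.I * (α₀ : ℂ) * (ω : ℂ) *
        ((-(2/π) * (Real.log |ω₀| - Real.log |ω|) : ℝ) : ℂ))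
      = ((α₀ * |ω| : ℝ) : ℂ) +
        Complex.I * (α₀ : ℂ) * ((2 / π : ℝ) : ℂ) * (ω : ℂ)
          * ((Real.log |ω| - Real.log |ω₀| : ℝ) : ℂ) := by
    push_cast
    ring
  rw [hval] at hg
  -- eventual equality
  refine hg.congr' ?_
  filter_upwards [self_mem_nhdsWithin] with γ hγS
  have hγ1 : γ ≠ 1 := by simpa using hγS 1
  have hc : Real.cos (π * γ / 2) ≠ 0 := by
    rw [Real.cos_ne_zero_iff]
    intro k hk
    apply hγS (2 * k + 1)
    have hπ : π ≠ 0 := Real.pi_ne_zero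
    have h2 : π * γ = π * (2 * (k:ℝ) + 1) := by
      field_simp at hk; rw [hk]
    have h3 := mul_left_cancel₀ hπ h2
    push_cast
    linarith [h3]
  have hsub : γ - 1 ≠ 0 := sub_ne_zero.mpr hγ1
  have hcC : ((Real.cos (π * γ / 2) : ℝ) : ℂ) ≠ 0 := Complex.ofReal_ne_zero.mpr hc
  -- simplify the inner real factor
  have hinner : ((γ-1) * Real.tan (π * γ / 2)) * ((|ω₀| ^ (γ-1) - |ω| ^ (γ-1)) / (γ-1))
      = Real.tan (π * γ / 2) * (|ω₀| ^ (γ-1) - |ω| ^ (γ-1)) := by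
    field_simp
  rw [hinner]
  rcases hω.lt_or_gt with hneg | hpos
  · -- ω < 0
    have habsω : |ω| = -ω := abs_of_neg hneg
    have hAB : |ω| ^ γ = |ω| * |ω| ^ (γ - 1) := by
      rw [show γ = 1 + (γ - 1) by ring, Real.rpow_add habs, Real.rpow_one]
      ring_nf
    rw [cpow_expand_neg ω hneg γ, hAB, habsω, Real.tan_eq_sin_div_cos]
    have hcC2 : Complex.cos ((π:ℂ) * (γ:ℂ) / 2) ≠ 0 := by
      have he : ((Real.cos (π * γ / 2) : ℝ) : ℂ) = Complex.cos ((π:ℂ) * (γ:ℂ) / 2) := by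
        push_cast
        ring_nf
      rw [← he]
      exact hcC
    push_cast
    field_simp [hcC2]
    ring
  · -- ω > 0
    have habsω : |ω| = ω := abs_of_pos hpos
    have hAB : ω ^ γ = ω * ω ^ (γ - 1) := by
      rw [show γ = 1 + (γ - 1) by ring, Real.rpow_add hpos, Real.rpow_one]
      ring_nf
    rw [habsω, cpow_expand_pos ω hpos γ, hAB, Real.tan_eq_sin_div_cos]
    have hcC2 : Complex.cos ((π:ℂ) * (γ:ℂ) / 2) ≠ 0 := by
      have he : ((Real.cos (π * γ / 2) : ℝ) : ℂ) = Complex.cos ((π:ℂ) * (γ:ℂ) / 2) := by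
        push_cast
        ring_nf
      rw [← he]
      exact hcC
    push_cast
    field_simp [hcC2]
    ring
end

section
/- For γ ∈ (0,1) and z = z₁ + i·z₂ with z₂ < 0, the complex number B(z) := √(1 + 2a·(1/(iz))^{1−γ}) − 1 (primitive/principal square root, a > 0 constant) has nonnegative real part, and z₁·Im(B(z)) ≤ 0; consequently z₁·Im(B(z)) + z₂·Re(B(z)) ≤ 0. -/
open Complex Real

lemma cpow_real_re (w : ℂ) (hw : w ≠ 0) (r : ℝ) :
    (w ^ (r : ℂ)).re = ‖w‖ ^ r * Real.cos (r * w.arg) := by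
  rw [Complex.cpow_def_of_ne_zero hw, Complex.exp_re]
  have h1 : (Complex.log w * (r : ℂ)).re = Real.log (‖w‖) * r := by
    simp [Complex.log_re]
  have h2 : (Complex.log w * (r : ℂ)).im = w.arg * r := by
    simp [Complex.log_im]
  rw [h1, h2, Real.rpow_def_of_pos (norm_pos_iff.mpr hw), mul_comm r w.arg]

lemma cpow_real_im (w : ℂ) (hw : w ≠ 0) (r : ℝ) :
    (w ^ (r : ℂ)).im = ‖w‖ ^ r * Real.sin (r * w.arg) := by
  rw [Complex.cpow_def_of_ne_zero hw, Complex.exp_im]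
  have h1 : (Complex.log w * (r : ℂ)).re = Real.log (‖w‖) * r := by
    simp [Complex.log_re]
  have h2 : (Complex.log w * (r : ℂ)).im = w.arg * r := by
    simp [Complex.log_im]
  rw [h1, h2, Real.rpow_def_of_pos (norm_pos_iff.mpr hw), mul_comm r w.arg]

set_option maxHeartbeats 1000000 in
theorem szabo_B_signs (γ a : ℝ) (hγ0 : 0 < γ) (hγ1 : γ < 1) (ha : 0 < a)
    (z : ℂ) (hz : z.im < 0) :
    0 ≤ ((1 + 2 * (a : ℂ) * (1 / (Complex.I * z)) ^ ((1 - γ : ℝ) : ℂ)) ^ ((1 : ℂ) / 2) - 1).re ∧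
    z.re * ((1 + 2 * (a : ℂ) * (1 / (Complex.I * z)) ^ ((1 - γ : ℝ) : ℂ)) ^ ((1 : ℂ) / 2) - 1).im ≤ 0 ∧
    z.re * ((1 + 2 * (a : ℂ) * (1 / (Complex.I * z)) ^ ((1 - γ : ℝ) : ℂ)) ^ ((1 : ℂ) / 2) - 1).im
      + z.im * ((1 + 2 * (a : ℂ) * (1 / (Complex.I * z)) ^ ((1 - γ : ℝ) : ℂ)) ^ ((1 : ℂ) / 2) - 1).re
      ≤ 0 := by
  have hz0 : z ≠ 0 := fun h => by simp [h] at hz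
  have hIz : Complex.I * z ≠ 0 := mul_ne_zero Complex.I_ne_zero hz0
  have hIzre : 0 < (Complex.I * z).re := by
    simp [Complex.mul_re]; linarith
  -- w = 1/(I z)
  set w : ℂ := 1 / (Complex.I * z) with hw_def
  clear_value w
  have hw0 : w ≠ 0 := by
    rw [hw_def]; exact one_div_ne_zero hIz
  -- arg bounds
  have hargIz : |(Complex.I * z).arg| < π / 2 :=
    Complex.abs_arg_lt_pi_div_two_iff.mpr (Or.inl hIzre)
  have hargIz_ne : (Complex.I * z).arg ≠ π := by
    intro h
    rw [h] at hargIz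
    rw [abs_of_pos Real.pi_pos] at hargIz
    linarith [Real.pi_pos]
  have hargw : w.arg = -(Complex.I * z).arg := by
    rw [hw_def, one_div, Complex.arg_inv, if_neg hargIz_ne]
  have hargw_abs : |w.arg| < π / 2 := by
    rw [hargw, abs_neg]; exact hargIz
  -- sign of arg(I z) equals sign of z.re  (since (I z).im = z.re, (I z).re > 0)
  have hIzim : (Complex.I * z).im = z.re := by simp [Complex.mul_im]
  -- θ = (1-γ) * arg w
  have h1γ : 0 < 1 - γ := by linarith
  have h1γ1 : 1 - γ < 1 := by linarith
  set θ : ℝ := (1 - γ) * w.arg with hθ_def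
  clear_value θ
  have hθ_abs : |θ| < π / 2 := by
    rw [hθ_def, abs_mul, abs_of_pos h1γ]
    calc (1 - γ) * |w.arg| ≤ 1 * |w.arg| := by
          apply mul_le_mul_of_nonneg_right (by linarith) (abs_nonneg _)
      _ = |w.arg| := one_mul _
      _ < π / 2 := hargw_abs
  have hR : (0:ℝ) < ‖w‖ ^ (1 - γ) := Real.rpow_pos_of_pos (norm_pos_iff.mpr hw0) _
  set R : ℝ := ‖w‖ ^ (1 - γ) with hR_def
  clear_value R
  have hwre : (w ^ ((1 - γ : ℝ) : ℂ)).re = R * Real.cos θ := by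
    rw [hR_def, hθ_def]; exact cpow_real_re w hw0 _
  have hwim : (w ^ ((1 - γ : ℝ) : ℂ)).im = R * Real.sin θ := by
    rw [hR_def, hθ_def]; exact cpow_real_im w hw0 _
  have hcosθ : 0 < Real.cos θ := by
    apply Real.cos_pos_of_mem_Ioo
    constructor
    · linarith [abs_lt.mp hθ_abs |>.1]
    · linarith [abs_lt.mp hθ_abs |>.2]
  -- u = 1 + 2 a w^{1-γ}
  set u : ℂ := 1 + 2 * (a : ℂ) * w ^ ((1 - γ : ℝ) : ℂ) with hu_def
  clear_value u
  have h2a : (2 * (a:ℂ)) = ((2*a : ℝ) : ℂ) := by push_cast; ring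
  have hure : u.re = 1 + 2 * a * (R * Real.cos θ) := by
    rw [hu_def, h2a, Complex.add_re, Complex.one_re, Complex.re_ofReal_mul, hwre]
  have huim : u.im = 2 * a * (R * Real.sin θ) := by
    rw [hu_def, h2a, Complex.add_im, Complex.one_im, Complex.im_ofReal_mul, hwim]; ring_nf
  have hure1 : 1 < u.re := by
    rw [hure]
    nlinarith [mul_pos hR hcosθ]
  have hu0 : u ≠ 0 := fun h => by rw [h] at hure1; simp at hure1; linarith
  have hargu_abs : |u.arg| < π / 2 :=
    Complex.abs_arg_lt_pi_div_two_iff.mpr (Or.inl (by linarith))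
  -- s = u ^ (1/2)
  have hhalf : ((1 : ℂ) / 2) = (((1/2 : ℝ)) : ℂ) := by norm_num
  set s : ℂ := u ^ ((1 : ℂ) / 2) with hs_def
  clear_value s
  have hsre : s.re = ‖u‖ ^ (1/2 : ℝ) * Real.cos ((1/2) * u.arg) := by
    rw [hs_def, hhalf]; exact cpow_real_re u hu0 _
  have hsim : s.im = ‖u‖ ^ (1/2 : ℝ) * Real.sin ((1/2) * u.arg) := by
    rw [hs_def, hhalf]; exact cpow_real_im u hu0 _
  have hAu : (0:ℝ) < ‖u‖ ^ (1/2 : ℝ) := Real.rpow_pos_of_pos (norm_pos_iff.mpr hu0) _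
  have hcos_half : 0 < Real.cos ((1/2) * u.arg) := by
    apply Real.cos_pos_of_mem_Ioo
    have := abs_lt.mp hargu_abs
    constructor <;> [linarith [this.1]; linarith [this.2]]
  have hsre_pos : 0 < s.re := by rw [hsre]; exact mul_pos hAu hcos_half
  -- s.re ^ 2 = (|u| + u.re)/2 ≥ u.re > 1
  have hcos_sq : Real.cos ((1/2) * u.arg) ^ 2 = (1 + Real.cos u.arg) / 2 := by
    have h := Real.cos_sq ((1/2) * u.arg)
    rw [h]
    have : 2 * ((1/2) * u.arg) = u.arg := by ring
    rw [this]; ring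
  have habs_sq : (‖u‖ ^ (1/2 : ℝ)) ^ 2 = ‖u‖ := by
    rw [← Real.rpow_natCast (‖u‖ ^ (1/2:ℝ)) 2, ← Real.rpow_mul (norm_nonneg u)]
    norm_num
  have hcosargu : Real.cos u.arg = u.re / ‖u‖ := Complex.cos_arg hu0
  have hsre_sq : s.re ^ 2 = (‖u‖ + u.re) / 2 := by
    rw [hsre, mul_pow, habs_sq, hcos_sq, hcosargu]
    field_simp [(norm_pos_iff.mpr hu0).ne']
  have habs_ge : u.re ≤ ‖u‖ := Complex.re_le_norm u
  have hsre_ge1 : 1 ≤ s.re := by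
    nlinarith [hsre_sq, hsre_pos]
  have hkey : z.re * s.im ≤ 0 := by
    rcases lt_trichotomy z.re 0 with hre | hre | hre
    · -- z.re < 0 : arg(Iz) < 0, arg w > 0, θ > 0... show 0 ≤ s.im
      have h1 : (Complex.I * z).arg < 0 := Complex.arg_neg_iff.mpr (by rw [hIzim]; exact hre)
      have h2 : 0 < w.arg := by rw [hargw]; linarith
      have hθpos : 0 < θ := by rw [hθ_def]; exact mul_pos h1γ h2
      have hsinθ : 0 < Real.sin θ := by
        apply Real.sin_pos_of_pos_of_lt_pi hθpos
        have := abs_lt.mp hθ_abs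
        linarith [Real.pi_pos, this.2]
      have huim_pos : 0 < u.im := by
        rw [huim]; have := mul_pos hR hsinθ; nlinarith
      have hargu_pos : 0 ≤ u.arg := Complex.arg_nonneg_iff.mpr huim_pos.le
      have : 0 ≤ Real.sin ((1/2) * u.arg) := by
        apply Real.sin_nonneg_of_nonneg_of_le_pi (by linarith)
        have := abs_lt.mp hargu_abs
        linarith [Real.pi_pos, this.2]
      have : 0 ≤ s.im := by rw [hsim]; exact mul_nonneg hAu.le this
      nlinarith
    · simp [hre]
    · -- z.re > 0 : show s.im ≤ 0
      have h1 : 0 ≤ (Complex.I * z).arg := Complex.arg_nonneg_iff.mpr (by rw [hIzim]; exact hre.le)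
      have h2 : w.arg ≤ 0 := by rw [hargw]; linarith
      have hθneg : θ ≤ 0 := by
        rw [hθ_def]
        exact mul_nonpos_of_nonneg_of_nonpos h1γ.le h2
      have hsinθ : Real.sin θ ≤ 0 := by
        apply Real.sin_nonpos_of_nonpos_of_neg_pi_le hθneg
        have := abs_lt.mp hθ_abs
        linarith [Real.pi_pos, this.1]
      have huim_neg : u.im ≤ 0 := by
        rw [huim]
        have : 0 ≤ 2 * a * R := by positivity
        nlinarith
      have hargu_neg : u.arg ≤ 0 := by
        by_contra h
        push_neg at h
        have := Complex.arg_nonneg_iff.mp h.le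
        -- need u.im > 0? arg > 0 → im > 0? Use arg_neg_iff contrapositive:
        rcases lt_or_eq_of_le huim_neg with h' | h'
        · have := Complex.arg_neg_iff.mpr h'
          linarith
        · -- u.im = 0, u.re > 0 → arg = 0
          have : u.arg = 0 := by
            rw [Complex.arg_eq_zero_iff]
            constructor
            · linarith
            · exact h'
          linarith
      have hs_im_neg : s.im ≤ 0 := by
        rw [hsim]
        apply mul_nonpos_of_nonneg_of_nonpos hAu.le
        apply Real.sin_nonpos_of_nonpos_of_neg_pi_le (by linarith)
        have := abs_lt.mp hargu_abs
        linarith [Real.pi_pos, this.1]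
      nlinarith
  have h3 : z.im * (s - 1).re ≤ 0 := by
    apply mul_nonpos_of_nonpos_of_nonneg hz.le
    simp [Complex.sub_re]; linarith
  have hsim1 : (s - 1).im = s.im := by simp
  refine ⟨?_, ?_, ?_⟩
  · show 0 ≤ (s - 1).re
    simp [Complex.sub_re]; linarith
  · show z.re * (s - 1).im ≤ 0
    rw [hsim1]; exact hkey
  · show z.re * (s - 1).im + z.im * (s - 1).re ≤ 0
    rw [hsim1]; linarith
end

section
/- Let γ ∈ (1,2], τ₀ > 0, c₁ > 0, and define α_*(ω) := (−iω)/(c₁·√(1 + (−iτ₀ω)^{γ−1})) for ω in the closed lower half-plane with negative imaginary part. Then for all z = z₁ + iz₂ with z₂ < 0, −Re(α_*(−z)) ≤ 0, i.e. Re(iz / (c₁·√(1 + (iτ₀z)^{γ−1}))) ≥ 0. -/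
open Complex Real

lemma cpow_real_re_im (x : ℂ) (hx : x ≠ 0) (r : ℝ) :
    (x ^ (r : ℂ)).re = ‖x‖ ^ r * Real.cos (r * x.arg) ∧
    (x ^ (r : ℂ)).im = ‖x‖ ^ r * Real.sin (r * x.arg) := by
  have habs : (0:ℝ) < ‖x‖ := norm_pos_iff.mpr hx
  have hexp : Real.exp (Real.log (‖x‖) * r) = ‖x‖ ^ r := by
    rw [Real.rpow_def_of_pos habs]
  have hre : (Complex.log x * (r : ℂ)).re = Real.log (‖x‖) * r := by
    simp [Complex.log_re]
  have him : (Complex.log x * (r : ℂ)).im = r * x.arg := by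
    simp [Complex.log_im, mul_comm]
  rw [Complex.cpow_def_of_ne_zero hx, Complex.exp_re, Complex.exp_im, hre, him, hexp]
  exact ⟨rfl, rfl⟩

lemma arg_nonpos_of_re_pos_im_nonpos (v : ℂ) (hre : 0 < v.re) (him : v.im ≤ 0) :
    v.arg ≤ 0 := by
  rcases him.lt_or_eq with h | h
  · exact (Complex.arg_neg_iff.mpr h).le
  · exact le_of_eq (Complex.arg_eq_zero_iff.mpr ⟨hre.le, h⟩)

set_option maxHeartbeats 1000000 in
theorem modified_tv_re_nonneg (γ τ₀ c₁ : ℝ) (hγ1 : 1 < γ) (hγ2 : γ ≤ 2)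
    (hτ : 0 < τ₀) (hc : 0 < c₁) (z : ℂ) (hz : z.im < 0) :
    0 ≤ (Complex.I * z /
          ((c₁ : ℂ) * (1 + (Complex.I * (τ₀ : ℂ) * z) ^ ((γ - 1 : ℝ) : ℂ)) ^ ((1 : ℂ) / 2))).re := by
  set w : ℂ := Complex.I * z with hw
  have hwre : 0 < w.re := by
    simp only [hw, Complex.mul_re, Complex.I_re, Complex.I_im]
    simp; linarith
  have hwne : w ≠ 0 := by
    intro h; rw [h] at hwre; simp at hwre
  set r : ℝ := γ - 1 with hrdef
  have hr0 : 0 < r := by simp only [hrdef]; linarith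
  have hr1 : r ≤ 1 := by simp only [hrdef]; linarith
  have harg : |w.arg| < π / 2 := Complex.abs_arg_lt_pi_div_two_iff.mpr (Or.inl hwre)
  have hrw : Complex.I * (τ₀:ℂ) * z = (τ₀:ℂ) * w := by rw [hw]; ring
  set x : ℂ := (τ₀:ℂ) * w with hx
  have hxne : x ≠ 0 := mul_ne_zero (by exact_mod_cast hτ.ne') hwne
  have hxarg : x.arg = w.arg := Complex.arg_real_mul w hτ
  obtain ⟨hξre, hξim⟩ := cpow_real_re_im x hxne r
  rw [hxarg] at hξre hξim
  have habsx : (0:ℝ) < ‖x‖ ^ r := Real.rpow_pos_of_pos (norm_pos_iff.mpr hxne) r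
  have hrarg : |r * w.arg| < π / 2 := by
    rw [abs_mul]
    calc |r| * |w.arg| ≤ 1 * |w.arg| := by
          apply mul_le_mul_of_nonneg_right _ (abs_nonneg _)
          rw [abs_of_pos hr0]; exact hr1
      _ = |w.arg| := one_mul _
      _ < π / 2 := harg
  have hpi := Real.pi_pos
  have hcos : 0 < Real.cos (r * w.arg) := by
    apply Real.cos_pos_of_mem_Ioo
    exact ⟨(abs_lt.mp hrarg).1, (abs_lt.mp hrarg).2⟩
  set ξ : ℂ := x ^ (r : ℂ) with hξ
  have hure : 0 < (1 + ξ).re := by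
    simp only [Complex.add_re, Complex.one_re, hξre]
    positivity
  have hune : (1 + ξ) ≠ 0 := by
    intro h; rw [h] at hure; simp at hure
  have huarg : |(1 + ξ).arg| < π / 2 := Complex.abs_arg_lt_pi_div_two_iff.mpr (Or.inl hure)
  obtain ⟨hsre, hsim⟩ := cpow_real_re_im (1 + ξ) hune (1/2)
  set s : ℂ := (1 + ξ) ^ (((1:ℝ)/2 : ℝ) : ℂ) with hs
  have habsu : (0:ℝ) < ‖1 + ξ‖ ^ ((1:ℝ)/2 : ℝ) :=
    Real.rpow_pos_of_pos (norm_pos_iff.mpr hune) _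
  have hsre_pos : 0 < s.re := by
    rw [hsre]
    apply mul_pos habsu
    apply Real.cos_pos_of_mem_Ioo
    have h1 := (abs_lt.mp huarg).1
    have h2 := (abs_lt.mp huarg).2
    constructor
    · nlinarith
    · nlinarith
  have hsign : 0 ≤ w.im * s.im := by
    rcases le_or_gt 0 w.im with h | h
    · have ha : 0 ≤ w.arg := Complex.arg_nonneg_iff.mpr h
      have hξim_nonneg : 0 ≤ ξ.im := by
        rw [hξim]
        apply mul_nonneg habsx.le
        apply Real.sin_nonneg_of_nonneg_of_le_pi (by positivity)
        nlinarith [(abs_lt.mp hrarg).2]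
      have huim : 0 ≤ (1 + ξ).im := by simpa using hξim_nonneg
      have huarg_nonneg : 0 ≤ (1 + ξ).arg := Complex.arg_nonneg_iff.mpr huim
      have hsim_nonneg : 0 ≤ s.im := by
        rw [hsim]
        apply mul_nonneg habsu.le
        apply Real.sin_nonneg_of_nonneg_of_le_pi (by positivity)
        nlinarith [(abs_lt.mp huarg).2]
      exact mul_nonneg h hsim_nonneg
    · have ha : w.arg < 0 := Complex.arg_neg_iff.mpr h
      have hξim_nonpos : ξ.im ≤ 0 := by
        rw [hξim]
        apply mul_nonpos_of_nonneg_of_nonpos habsx.le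
        have h1 : -π ≤ r * w.arg := by nlinarith [(abs_lt.mp hrarg).1]
        have h2 : r * w.arg ≤ 0 := by nlinarith
        exact Real.sin_nonpos_of_nonpos_of_neg_pi_le h2 h1
      have huim : (1 + ξ).im ≤ 0 := by simpa using hξim_nonpos
      have huarg_nonpos : (1 + ξ).arg ≤ 0 :=
        arg_nonpos_of_re_pos_im_nonpos _ hure huim
      have hsim_nonpos : s.im ≤ 0 := by
        rw [hsim]
        apply mul_nonpos_of_nonneg_of_nonpos habsu.le
        have h1 : -π ≤ (1:ℝ)/2 * (1 + ξ).arg := by nlinarith [(abs_lt.mp huarg).1]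
        have h2 : (1:ℝ)/2 * (1 + ξ).arg ≤ 0 := by nlinarith
        exact Real.sin_nonpos_of_nonpos_of_neg_pi_le h2 h1
      nlinarith
  have hhalf : ((1:ℂ)/2) = (((1:ℝ)/2 : ℝ) : ℂ) := by norm_num
  rw [hrw, hhalf, ← hξ, ← hs, Complex.div_re]
  have hDre : ((c₁:ℂ) * s).re = c₁ * s.re := by
    simp [Complex.mul_re]
  have hDim : ((c₁:ℂ) * s).im = c₁ * s.im := by
    simp [Complex.mul_im]
  rw [hDre, hDim]
  apply add_nonneg
  · apply div_nonneg _ (Complex.normSq_nonneg _)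
    positivity
  · apply div_nonneg _ (Complex.normSq_nonneg _)
    nlinarith
end
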